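/- Let m ≥ 2 and let G be a finite group whose central quotient G/Z(G) is isomorphic to the dihedral group D_{2m} of order 2m. Then for every non-central element x of G, the centralizer C_G(x) is an abelian subgroup of G whose order is either m·|Z(G)| or 2·|Z(G)|. -/

import Mathlib

theorem centralizer_abelian_of_central_quotient_dihedral
    (m : ℕ) (hm : 2 ≤ m) (G : Type*) [Group G] [Finite G]
    (hZ : Nonempty ((G ⧸ Subgroup.center G) ≃* DihedralGroup m))
    (x : G) (hx : x ∉ Subgroup.center G) :
    (∀ a ∈ Subgroup.centralizer {x}, ∀ b ∈ Subgroup.centralizer {x}, a * b = b * a) ∧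
      (Nat.card (Subgroup.centralizer {x} : Subgroup G) =
          m * Nat.card (Subgroup.center G) ∨
        Nat.card (Subgroup.centralizer {x} : Subgroup G) =
          2 * Nat.card (Subgroup.center G)) := by
  haveI : NeZero m := ⟨by omega⟩
  obtain ⟨φ⟩ := hZ
  set Z := Subgroup.center G with hZdef
  let ψ : G →* DihedralGroup m := φ.toMonoidHom.comp (QuotientGroup.mk' Z)
  have hker : ∀ g : G, ψ g = 1 ↔ g ∈ Z := by
    intro g
    constructor
    · intro h
      have h2 : QuotientGroup.mk' Z g = 1 := φ.injective (by simpa [ψ] using h)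
      exact (QuotientGroup.eq_one_iff g).mp h2
    · intro h
      have h2 : QuotientGroup.mk' Z g = 1 := (QuotientGroup.eq_one_iff g).mpr h
      show φ (QuotientGroup.mk' Z g) = 1
      rw [h2, map_one]
  have hsurj : Function.Surjective ψ :=
    φ.surjective.comp (QuotientGroup.mk'_surjective Z)
  obtain ⟨g₀, hg₀⟩ := hsurj (DihedralGroup.r 1)
  -- representation of rotation-preimages
  have rep : ∀ g : G, ∀ i : ZMod m, ψ g = DihedralGroup.r i →
      ∃ (n : ℕ) (z : G), z ∈ Z ∧ g = g₀ ^ n * z := by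
    intro g i hgi
    refine ⟨i.val, (g₀ ^ i.val)⁻¹ * g, ?_, by group⟩
    rw [← hker]
    have h1 : ψ (g₀ ^ i.val) = DihedralGroup.r i := by
      rw [map_pow, hg₀, DihedralGroup.r_one_pow, ZMod.natCast_zmod_val]
    rw [map_mul, map_inv, h1, hgi]
    simp
  -- commuting of things of form h^n * z with z central
  have aux : ∀ (h a b : G), (∃ (n : ℕ) (z : G), z ∈ Z ∧ a = h ^ n * z) →
      (∃ (n : ℕ) (z : G), z ∈ Z ∧ b = h ^ n * z) → a * b = b * a := by
    rintro h a b ⟨n, z, hz, rfl⟩ ⟨n', z', hz', rfl⟩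
    have cz : ∀ w, Commute z w := fun w => ((Subgroup.mem_center_iff.mp hz) w).symm
    have cz' : ∀ w, Commute z' w := fun w => ((Subgroup.mem_center_iff.mp hz') w).symm
    exact (Commute.mul_left (((Commute.refl h).pow_pow n n').mul_right
      ((cz' _).symm)) (cz _)).eq
  have hxmem : ∀ c : G, c ∈ Subgroup.centralizer {x} ↔ x * c = c * x := by
    intro c; rw [Subgroup.mem_centralizer_iff]; simp
  have hψx : ψ x ≠ 1 := fun h => hx ((hker x).mp h)
  have hsrinv : ∀ k : ZMod m, (DihedralGroup.sr k)⁻¹ = DihedralGroup.sr k :=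
    fun k => inv_eq_of_mul_eq_one_right (DihedralGroup.sr_mul_self k)
  -- case on ψ x
  cases hψx' : ψ x with
  | r i =>
    -- x maps to a rotation; centralizer = rotation preimage
    have hC : ∀ c : G, c ∈ Subgroup.centralizer {x} ↔
        ∃ j : ZMod m, ψ c = DihedralGroup.r j := by
      intro c
      constructor
      · intro hc
        cases hc' : ψ c with
        | r j => exact ⟨j, rfl⟩
        | sr k =>
          exfalso
          apply hx
          rw [hZdef, Subgroup.mem_center_iff]
          intro g
          cases hg : ψ g with
          | r t =>
            exact aux g₀ g x (rep g t hg) (rep x i hψx')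
          | sr t =>
            have ha : ψ (g * c⁻¹) = DihedralGroup.r (k - t) := by
              rw [map_mul, map_inv, hg, hc', hsrinv]
              simp
            have hcom1 : Commute (g * c⁻¹) x :=
              aux g₀ _ x (rep _ _ ha) (rep x i hψx')
            have hcom2 : Commute x c := (hxmem c).mp hc
            have hgd : g = (g * c⁻¹) * c := by group
            rw [hgd]
            exact (Commute.mul_right hcom1.symm hcom2).symm.eq
      · rintro ⟨j, hj⟩
        rw [hxmem]
        exact (aux g₀ c x (rep c j hj) (rep x i hψx')).symm
    constructor
    · intro a ha b hb
      obtain ⟨j, hj⟩ := (hC a).mp ha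
      obtain ⟨j', hj'⟩ := (hC b).mp hb
      exact aux g₀ a b (rep a j hj) (rep b j' hj')
    · left
      -- bijection ZMod m × Z ≃ centralizer
      let f : ZMod m × Z → (Subgroup.centralizer {x} : Subgroup G) := fun p =>
        ⟨g₀ ^ p.1.val * p.2.1, (hC _).mpr ⟨p.1, by
          rw [map_mul, map_pow, hg₀, DihedralGroup.r_one_pow,
            (hker _).mpr p.2.2, mul_one, ZMod.natCast_zmod_val]⟩⟩
      have hinj : Function.Injective f := by
        rintro ⟨a, z⟩ ⟨a', z'⟩ h
        have h1 : g₀ ^ a.val * z.1 = g₀ ^ a'.val * z'.1 := congrArg Subtype.val h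
        have h2 : ψ (g₀ ^ a.val * z.1) = DihedralGroup.r a := by
          rw [map_mul, map_pow, hg₀, DihedralGroup.r_one_pow,
            (hker _).mpr z.2, mul_one, ZMod.natCast_zmod_val]
        have h3 : ψ (g₀ ^ a'.val * z'.1) = DihedralGroup.r a' := by
          rw [map_mul, map_pow, hg₀, DihedralGroup.r_one_pow,
            (hker _).mpr z'.2, mul_one, ZMod.natCast_zmod_val]
        have haa : a = a' := by
          have h4 : DihedralGroup.r (n := m) a = DihedralGroup.r a' := by
            rw [← h2, ← h3, h1]
          exact DihedralGroup.r.inj h4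
        subst haa
        exact Prod.ext rfl (Subtype.ext (mul_left_cancel h1))
      have hsurjf : Function.Surjective f := by
        rintro ⟨c, hc⟩
        obtain ⟨j, hj⟩ := (hC c).mp hc
        refine ⟨⟨j, ⟨(g₀ ^ j.val)⁻¹ * c, ?_⟩⟩, ?_⟩
        · rw [← hker, map_mul, map_inv, map_pow, hg₀, DihedralGroup.r_one_pow,
            ZMod.natCast_zmod_val, hj]
          simp
        · apply Subtype.ext
          show g₀ ^ j.val * ((g₀ ^ j.val)⁻¹ * c) = c
          group
      have : Nat.card (Subgroup.centralizer ({x} : Set G) : Subgroup G)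
          = Nat.card (ZMod m × Z) :=
        (Nat.card_congr (Equiv.ofBijective f ⟨hinj, hsurjf⟩)).symm
      rw [this, Nat.card_prod, Nat.card_zmod]
  | sr j =>
    -- x maps to a reflection
    -- key: any centralizing c mapping to a rotation is central
    have key : ∀ c : G, c ∈ Subgroup.centralizer {x} →
        (∃ t : ZMod m, ψ c = DihedralGroup.r t) → c ∈ Z := by
      rintro c hc ⟨t, ht⟩
      rw [hZdef, Subgroup.mem_center_iff]
      intro g
      cases hg : ψ g with
      | r u => exact aux g₀ g c (rep g u hg) (rep c t ht)
      | sr u =>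
        have ha : ψ (g * x⁻¹) = DihedralGroup.r (j - u) := by
          rw [map_mul, map_inv, hg, hψx', hsrinv]
          simp
        have hcom1 : Commute (g * x⁻¹) c :=
          aux g₀ _ c (rep _ _ ha) (rep c t ht)
        have hcom2 : Commute x c := (hxmem c).mp hc
        have hgd : g = (g * x⁻¹) * x := by group
        rw [hgd]
        exact (Commute.mul_left hcom1 hcom2).eq
    -- characterization
    have hC : ∀ c : G, c ∈ Subgroup.centralizer {x} ↔
        (c ∈ Z ∨ ∃ z, z ∈ Z ∧ c = x * z) := by
      intro c
      constructor
      · intro hc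
        cases hc' : ψ c with
        | r t => exact Or.inl (key c hc ⟨t, hc'⟩)
        | sr t =>
          right
          have hmem : c * x⁻¹ ∈ Subgroup.centralizer ({x} : Set G) :=
            Subgroup.mul_mem _ hc (Subgroup.inv_mem _ ((hxmem x).mpr rfl))
          have hrot : ψ (c * x⁻¹) = DihedralGroup.r (j - t) := by
            rw [map_mul, map_inv, hc', hψx', hsrinv]
            simp
          have hz : c * x⁻¹ ∈ Z := key _ hmem ⟨_, hrot⟩
          have h1 := Subgroup.mem_center_iff.mp hz x
          have heq : x⁻¹ * c = c * x⁻¹ := by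
            calc x⁻¹ * c = x⁻¹ * (c * x⁻¹ * x) := by group
              _ = x⁻¹ * (x * (c * x⁻¹)) := by rw [← h1]
              _ = c * x⁻¹ := by group
          refine ⟨x⁻¹ * c, heq ▸ hz, by group⟩
      · rintro (hcz | ⟨z, hz, rfl⟩)
        · rw [hxmem]
          exact Subgroup.mem_center_iff.mp hcz x
        · rw [hxmem]
          have h1 := Subgroup.mem_center_iff.mp hz
          simp only [mul_assoc]
          rw [h1 x]
    have repx : ∀ c : G, c ∈ Subgroup.centralizer {x} →
        ∃ (n : ℕ) (z : G), z ∈ Z ∧ c = x ^ n * z := by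
      intro c hc
      rcases (hC c).mp hc with h | ⟨z, hz, rfl⟩
      · exact ⟨0, c, h, by group⟩
      · exact ⟨1, z, hz, by group⟩
    constructor
    · intro a ha b hb
      exact aux x a b (repx a ha) (repx b hb)
    · right
      let f : Bool × Z → (Subgroup.centralizer {x} : Subgroup G) := fun p =>
        ⟨cond p.1 x 1 * p.2.1, by
          rw [hC]
          cases hb : p.1
          · exact Or.inl (by simp only [Bool.cond_false, one_mul]; exact p.2.2)
          · exact Or.inr ⟨p.2.1, p.2.2, by simp only [Bool.cond_true]⟩⟩
      have hinj : Function.Injective f := by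
        rintro ⟨a, z⟩ ⟨a', z'⟩ h
        have h1 : cond a x 1 * z.1 = cond a' x 1 * z'.1 := congrArg Subtype.val h
        cases a <;> cases a' <;>
          simp only [Bool.cond_false, Bool.cond_true, one_mul] at h1
        · exact Prod.ext rfl (Subtype.ext h1)
        · exact absurd (show x ∈ Z by
            have hx1 : x = z.1 * (z'.1)⁻¹ := by rw [h1]; group
            rw [hx1]; exact mul_mem z.2 (inv_mem z'.2)) hx
        · exact absurd (show x ∈ Z by
            have hx1 : x = z'.1 * (z.1)⁻¹ := by rw [← h1]; group
            rw [hx1]; exact mul_mem z'.2 (inv_mem z.2)) hx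
        · exact Prod.ext rfl (Subtype.ext (mul_left_cancel h1))
      have hsurjf : Function.Surjective f := by
        rintro ⟨c, hc⟩
        rcases (hC c).mp hc with h | ⟨z, hz, rfl⟩
        · exact ⟨⟨false, ⟨c, h⟩⟩, Subtype.ext (one_mul c)⟩
        · exact ⟨⟨true, ⟨z, hz⟩⟩, Subtype.ext rfl⟩
      have hcard : Nat.card (Subgroup.centralizer ({x} : Set G) : Subgroup G)
          = Nat.card (Bool × Z) :=
        (Nat.card_congr (Equiv.ofBijective f ⟨hinj, hsurjf⟩)).symm
      rw [hcard, Nat.card_prod]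
      congr 1
      simp [Nat.card_eq_fintype_card]
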